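/- arXiv:2306.08594 — 2 statements merged into one kernel-verified Lean document; each statement's English description precedes it below -/
import Mathlib

section
/- In a strongly connected directed co-graph G, for every pair of distinct vertices u, v the directed distance satisfies d_G(u,v) ≤ 2. -/
universe u

/-- There is a directed walk of length `n` from `u` to `v` in the digraph
with edge relation `E`. -/
def HasWalkLen {V : Type u} (E : V → V → Prop) (u v : V) (n : ℕ) : Prop :=
  ∃ f : Fin (n + 1) → V, f 0 = u ∧ f (Fin.last n) = v ∧
    ∀ i : Fin n, E (f i.castSucc) (f i.succ)

/-- `v` is reachable from `u` by a directed walk. -/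
def Reaches {V : Type u} (E : V → V → Prop) (u v : V) : Prop :=
  ∃ n, HasWalkLen E u v n

/-- Directed distance from `u` to `v` (length of a shortest directed path);
a junk value (`sInf ∅ = 0`) if `v` is unreachable from `u`. -/
noncomputable def ddist {V : Type u} (E : V → V → Prop) (u v : V) : ℕ :=
  sInf {n | HasWalkLen E u v n}

/-- `w` resolves the vertices `u` and `v`: `w = u`, or `w = v`, or both
distances from `w` are defined (reachable) and different. -/
def Resolves {V : Type u} (E : V → V → Prop) (w u v : V) : Prop :=
  w = u ∨ w = v ∨
    (Reaches E w u ∧ Reaches E w v ∧ ddist E w u ≠ ddist E w v)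

/-- `R` resolves the vertex set `U`: every pair of distinct vertices of `U`
is resolved by some member of `R`. -/
def ResolvesSet {V : Type u} (E : V → V → Prop) (R U : Set V) : Prop :=
  ∀ u ∈ U, ∀ v ∈ U, u ≠ v → ∃ w ∈ R, Resolves E w u v

/-- The digraph is strongly connected on the vertex set `S`. -/
def SConn {V : Type u} (E : V → V → Prop) (S : Set V) : Prop :=
  ∀ u ∈ S, ∀ v ∈ S, Reaches E u v

/-- `u` is a 1-vertex w.r.t. `R`: `u ∉ R` and every `w ∈ R` has an edge to `u`. -/
def OneVertex {V : Type u} (E : V → V → Prop) (R : Set V) (u : V) : Prop :=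
  u ∉ R ∧ ∀ w ∈ R, E w u

/-- `u` is a 2-vertex w.r.t. `R`: `u ∉ R` and no `w ∈ R` has an edge to `u`. -/
def TwoVertex {V : Type u} (E : V → V → Prop) (R : Set V) (u : V) : Prop :=
  u ∉ R ∧ ∀ w ∈ R, ¬ E w u

/-- Directed co-graphs with vertex set `S` and edge relation `E`, built
inductively from single vertices by disjoint union, join and directed join. -/
inductive IsDicograph {V : Type u} : Set V → (V → V → Prop) → Prop
  | single (v : V) : IsDicograph {v} fun _ _ => False
  | disjUnion {S₁ S₂ : Set V} {E₁ E₂ : V → V → Prop} :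
      IsDicograph S₁ E₁ → IsDicograph S₂ E₂ → Disjoint S₁ S₂ →
      IsDicograph (S₁ ∪ S₂) fun u v => E₁ u v ∨ E₂ u v
  | join {S₁ S₂ : Set V} {E₁ E₂ : V → V → Prop} :
      IsDicograph S₁ E₁ → IsDicograph S₂ E₂ → Disjoint S₁ S₂ →
      IsDicograph (S₁ ∪ S₂) fun u v =>
        E₁ u v ∨ E₂ u v ∨ (u ∈ S₁ ∧ v ∈ S₂) ∨ (u ∈ S₂ ∧ v ∈ S₁)
  | dirJoin {S₁ S₂ : Set V} {E₁ E₂ : V → V → Prop} :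
      IsDicograph S₁ E₁ → IsDicograph S₂ E₂ → Disjoint S₁ S₂ →
      IsDicograph (S₁ ∪ S₂) fun u v => E₁ u v ∨ E₂ u v ∨ (u ∈ S₁ ∧ v ∈ S₂)

lemma IsDicograph.nonempty {V : Type u} {S : Set V} {E : V → V → Prop}
    (hG : IsDicograph S E) : S.Nonempty := by
  induction hG with
  | single v => exact ⟨v, rfl⟩
  | disjUnion _ _ _ ih1 _ => exact ih1.mono Set.subset_union_left
  | join _ _ _ ih1 _ => exact ih1.mono Set.subset_union_left
  | dirJoin _ _ _ ih1 _ => exact ih1.mono Set.subset_union_left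

lemma IsDicograph.edge_mem {V : Type u} {S : Set V} {E : V → V → Prop}
    (hG : IsDicograph S E) : ∀ u v, E u v → u ∈ S ∧ v ∈ S := by
  induction hG with
  | single v => exact fun _ _ h => h.elim
  | disjUnion _ _ _ ih1 ih2 =>
    rintro u v (h | h)
    · exact ⟨Or.inl (ih1 u v h).1, Or.inl (ih1 u v h).2⟩
    · exact ⟨Or.inr (ih2 u v h).1, Or.inr (ih2 u v h).2⟩
  | join _ _ _ ih1 ih2 =>
    rintro u v (h | h | ⟨h1, h2⟩ | ⟨h1, h2⟩)
    · exact ⟨Or.inl (ih1 u v h).1, Or.inl (ih1 u v h).2⟩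
    · exact ⟨Or.inr (ih2 u v h).1, Or.inr (ih2 u v h).2⟩
    · exact ⟨Or.inl h1, Or.inr h2⟩
    · exact ⟨Or.inr h1, Or.inl h2⟩
  | dirJoin _ _ _ ih1 ih2 =>
    rintro u v (h | h | ⟨h1, h2⟩)
    · exact ⟨Or.inl (ih1 u v h).1, Or.inl (ih1 u v h).2⟩
    · exact ⟨Or.inr (ih2 u v h).1, Or.inr (ih2 u v h).2⟩
    · exact ⟨Or.inl h1, Or.inr h2⟩

lemma reaches_closed {V : Type u} {E : V → V → Prop} {T : Set V}
    (hT : ∀ x y, x ∈ T → E x y → y ∈ T) {u v : V}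
    (h : Reaches E u v) (hu : u ∈ T) : v ∈ T := by
  obtain ⟨n, f, hf0, hfl, hstep⟩ := h
  have key : ∀ i : Fin (n + 1), f i ∈ T := by
    intro i
    induction i using Fin.induction with
    | zero => rwa [hf0]
    | succ j ih => exact hT _ _ ih (hstep j)
  rw [← hfl]; exact key _

lemma hasWalkLen_one {V : Type u} {E : V → V → Prop} {u v : V}
    (h : E u v) : HasWalkLen E u v 1 := by
  refine ⟨![u, v], rfl, rfl, ?_⟩
  intro i
  fin_cases i
  exact h

lemma hasWalkLen_two {V : Type u} {E : V → V → Prop} {u w v : V}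
    (h1 : E u w) (h2 : E w v) : HasWalkLen E u v 2 := by
  refine ⟨![u, w, v], rfl, rfl, ?_⟩
  intro i
  fin_cases i
  · exact h1
  · exact h2

lemma ddist_le_of_walk {V : Type u} {E : V → V → Prop} {u v : V} {n : ℕ}
    (h : HasWalkLen E u v n) : ddist E u v ≤ n :=
  Nat.sInf_le (show n ∈ {m | HasWalkLen E u v m} from h)

/-- In a strongly connected directed co-graph all directed distances between
distinct vertices are at most 2. -/
theorem stmt_1 {V : Type u} {S : Set V} {E : V → V → Prop}
    (hG : IsDicograph S E) (hsc : SConn E S) :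
    ∀ u ∈ S, ∀ v ∈ S, u ≠ v → ddist E u v ≤ 2 := by
  cases hG with
  | single w =>
    intro u hu v hv huv
    exact absurd (hu.trans hv.symm) huv
  | @disjUnion S₁ S₂ E₁ E₂ h1 h2 hd =>
    exfalso
    obtain ⟨a, ha⟩ := h1.nonempty
    obtain ⟨b, hb⟩ := h2.nonempty
    have hr := hsc a (Or.inl ha) b (Or.inr hb)
    have hb1 : b ∈ S₁ := by
      refine reaches_closed ?_ hr ha
      rintro x y hx (h | h)
      · exact (h1.edge_mem x y h).2
      · exact absurd (Set.disjoint_right.mp hd (h2.edge_mem x y h).1) (fun hn => hn hx)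
    exact Set.disjoint_left.mp hd hb1 hb
  | @join S₁ S₂ E₁ E₂ h1 h2 hd =>
    intro u hu v hv huv
    rcases hu with hu | hu <;> rcases hv with hv | hv
    · obtain ⟨w, hw⟩ := h2.nonempty
      refine ddist_le_of_walk (hasWalkLen_two (w := w) ?_ ?_)
      · exact Or.inr (Or.inr (Or.inl ⟨hu, hw⟩))
      · exact Or.inr (Or.inr (Or.inr ⟨hw, hv⟩))
    · refine le_trans (ddist_le_of_walk (hasWalkLen_one ?_)) one_le_two
      exact Or.inr (Or.inr (Or.inl ⟨hu, hv⟩))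
    · refine le_trans (ddist_le_of_walk (hasWalkLen_one ?_)) one_le_two
      exact Or.inr (Or.inr (Or.inr ⟨hu, hv⟩))
    · obtain ⟨w, hw⟩ := h1.nonempty
      refine ddist_le_of_walk (hasWalkLen_two (w := w) ?_ ?_)
      · exact Or.inr (Or.inr (Or.inr ⟨hu, hw⟩))
      · exact Or.inr (Or.inr (Or.inl ⟨hw, hv⟩))
  | @dirJoin S₁ S₂ E₁ E₂ h1 h2 hd =>
    exfalso
    obtain ⟨a, ha⟩ := h1.nonempty
    obtain ⟨b, hb⟩ := h2.nonempty
    have hr := hsc b (Or.inr hb) a (Or.inl ha)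
    have ha2 : a ∈ S₂ := by
      refine reaches_closed ?_ hr hb
      rintro x y hx (h | h | ⟨hx1, hy2⟩)
      · exact absurd (Set.disjoint_left.mp hd (h1.edge_mem x y h).1) (fun hn => hn hx)
      · exact (h2.edge_mem x y h).2
      · exact absurd (Set.disjoint_left.mp hd hx1) (fun hn => hn hx)
    exact Set.disjoint_left.mp hd ha ha2
end

section
/- Let G be a strongly connected directed graph with all distances between distinct vertices at most 2, and let V1, V2 ⊆ V(G) be disjoint nonempty vertex sets such that there are no edges of G between V1 and V2 (in either direction). Let R1 ⊆ V1 be a set resolving V1 in G and R2 ⊆ V2 a set resolving V2 in G, both nonempty. If V1 has no 2-vertex w.r.t. R1 or V2 has no 2-vertex w.r.t. R2, then R1 ∪ R2 resolves V1 ∪ V2 in G. -/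
universe u

lemma hasWalkLen_zero_eq {V : Type u} {E : V → V → Prop} {a b : V}
    (h : HasWalkLen E a b 0) : a = b := by
  obtain ⟨f, h0, hl, _⟩ := h
  rw [← h0, ← hl]
  congr 1

lemma hasWalkLen_one_edge {V : Type u} {E : V → V → Prop} {a b : V}
    (h : HasWalkLen E a b 1) : E a b := by
  obtain ⟨f, h0, hl, hs⟩ := h
  have := hs 0
  have h1 : (Fin.last 1) = ((0 : Fin 1).succ) := by decide
  have h2 : ((0 : Fin 1).castSucc) = (0 : Fin 2) := by decide
  rw [h2, h0] at this
  rw [h1] at hl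
  rwa [hl] at this

lemma hasWalkLen_one_of_edge {V : Type u} {E : V → V → Prop} {a b : V}
    (h : E a b) : HasWalkLen E a b 1 := by
  refine ⟨![a, b], rfl, rfl, ?_⟩
  intro i
  fin_cases i
  simpa using h

lemma ddist_eq_one {V : Type u} {E : V → V → Prop} {a b : V}
    (hne : a ≠ b) (h : E a b) : ddist E a b = 1 := by
  have hmem : (1 : ℕ) ∈ {n | HasWalkLen E a b n} := hasWalkLen_one_of_edge h
  have hnemp : {n | HasWalkLen E a b n}.Nonempty := ⟨1, hmem⟩
  have hle : sInf {n | HasWalkLen E a b n} ≤ 1 := Nat.sInf_le hmem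
  have hin := Nat.sInf_mem hnemp
  have h0 : sInf {n | HasWalkLen E a b n} ≠ 0 := by
    intro h0
    exact hne (hasWalkLen_zero_eq (h0 ▸ hin))
  unfold ddist
  omega

lemma ddist_eq_two {V : Type u} {E : V → V → Prop} {a b : V}
    (hne : a ≠ b) (h : ¬ E a b) (hr : Reaches E a b)
    (hdiam : ∀ u v : V, u ≠ v → ddist E u v ≤ 2) : ddist E a b = 2 := by
  have hnemp : {n | HasWalkLen E a b n}.Nonempty := hr
  have hin := Nat.sInf_mem hnemp
  have hle := hdiam a b hne
  unfold ddist at hle ⊢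
  have h0 : sInf {n | HasWalkLen E a b n} ≠ 0 := by
    intro h0
    exact hne (hasWalkLen_zero_eq (h0 ▸ hin))
  have h1 : sInf {n | HasWalkLen E a b n} ≠ 1 := by
    intro h1
    exact h (hasWalkLen_one_edge (h1 ▸ hin))
  omega

lemma resolves_symm {V : Type u} {E : V → V → Prop} {w a b : V}
    (h : Resolves E w a b) : Resolves E w b a := by
  rcases h with h | h | ⟨r1, r2, hne⟩
  · exact Or.inr (Or.inl h)
  · exact Or.inl h
  · exact Or.inr (Or.inr ⟨r2, r1, hne.symm⟩)

/-- Cross-pair resolution: if `V₁` has no 2-vertex w.r.t. `R₁`, then any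
`u ∈ V₁`, `v ∈ V₂` are resolved by some `w ∈ R₁`. -/
lemma cross_resolve {V : Type u} {E : V → V → Prop}
    (hsc : SConn E Set.univ)
    (hdiam : ∀ u v : V, u ≠ v → ddist E u v ≤ 2)
    {V₁ V₂ R₁ : Set V}
    (hdisj : Disjoint V₁ V₂)
    (hnoedge : ∀ x ∈ V₁, ∀ y ∈ V₂, ¬ E x y ∧ ¬ E y x)
    (hR₁ : R₁ ⊆ V₁) (hR₁ne : R₁.Nonempty)
    (h2v : ¬ ∃ u ∈ V₁, TwoVertex E R₁ u)
    {u v : V} (hu : u ∈ V₁) (hv : v ∈ V₂) :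
    ∃ w ∈ R₁, Resolves E w u v := by
  by_cases huR : u ∈ R₁
  · exact ⟨u, huR, Or.inl rfl⟩
  · push_neg at h2v
    have := h2v u hu
    unfold TwoVertex at this
    push_neg at this
    obtain ⟨w, hwR, hwE⟩ := this huR
    have hwV₁ : w ∈ V₁ := hR₁ hwR
    have hwu : w ≠ u := fun h => huR (h ▸ hwR)
    have hwv : w ≠ v := fun h => (hdisj.ne_of_mem hwV₁ hv) h
    have hdu : ddist E w u = 1 := ddist_eq_one hwu hwE
    have hrv : Reaches E w v := hsc w trivial v trivial
    have hdv : ddist E w v = 2 :=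
      ddist_eq_two hwv (hnoedge w hwV₁ v hv).1 hrv hdiam
    exact ⟨w, hwR, Or.inr (Or.inr ⟨hsc w trivial u trivial, hrv, by omega⟩)⟩

/-- Disjoint union case: if one side has no 2-vertex, the union of the two
resolving sets resolves the union of the two vertex sets. -/
theorem stmt_4 {V : Type u} {E : V → V → Prop}
    (hsc : SConn E Set.univ)
    (hdiam : ∀ u v : V, u ≠ v → ddist E u v ≤ 2)
    {V₁ V₂ R₁ R₂ : Set V}
    (hdisj : Disjoint V₁ V₂) (hV₁ : V₁.Nonempty) (hV₂ : V₂.Nonempty)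
    (hnoedge : ∀ x ∈ V₁, ∀ y ∈ V₂, ¬ E x y ∧ ¬ E y x)
    (hR₁ : R₁ ⊆ V₁) (hR₂ : R₂ ⊆ V₂)
    (hR₁ne : R₁.Nonempty) (hR₂ne : R₂.Nonempty)
    (hres₁ : ResolvesSet E R₁ V₁) (hres₂ : ResolvesSet E R₂ V₂)
    (h2v : (¬ ∃ u ∈ V₁, TwoVertex E R₁ u) ∨ (¬ ∃ u ∈ V₂, TwoVertex E R₂ u)) :
    ResolvesSet E (R₁ ∪ R₂) (V₁ ∪ V₂) := by
  intro u hu v hv huv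
  have hnoedge' : ∀ x ∈ V₂, ∀ y ∈ V₁, ¬ E x y ∧ ¬ E y x := by
    intro x hx y hy
    exact ⟨(hnoedge y hy x hx).2, (hnoedge y hy x hx).1⟩
  rcases hu with hu1 | hu2 <;> rcases hv with hv1 | hv2
  · obtain ⟨w, hw, hres⟩ := hres₁ u hu1 v hv1 huv
    exact ⟨w, Or.inl hw, hres⟩
  · rcases h2v with h | h
    · obtain ⟨w, hw, hres⟩ :=
        cross_resolve hsc hdiam hdisj hnoedge hR₁ hR₁ne h hu1 hv2
      exact ⟨w, Or.inl hw, hres⟩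
    · obtain ⟨w, hw, hres⟩ :=
        cross_resolve hsc hdiam hdisj.symm hnoedge' hR₂ hR₂ne h hv2 hu1
      exact ⟨w, Or.inr hw, resolves_symm hres⟩
  · rcases h2v with h | h
    · obtain ⟨w, hw, hres⟩ :=
        cross_resolve hsc hdiam hdisj hnoedge hR₁ hR₁ne h hv1 hu2
      exact ⟨w, Or.inl hw, resolves_symm hres⟩
    · obtain ⟨w, hw, hres⟩ :=
        cross_resolve hsc hdiam hdisj.symm hnoedge' hR₂ hR₂ne h hu2 hv1
      exact ⟨w, Or.inr hw, hres⟩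
  · obtain ⟨w, hw, hres⟩ := hres₂ u hu2 v hv2 huv
    exact ⟨w, Or.inr hw, hres⟩
end
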